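/- Suppose no SCC of the dependence graph of A is super-critical. If m and m' are two nonnegative fixed points of A that agree on every vertex belonging to a critical SCC, then m = m'. In other words, the components of a nonnegative fixed point on the sub-critical SCCs are uniquely determined by its components on the critical SCCs. -/

import Mathlib

open Matrix Filter Topology Polynomial

attribute [local instance] Classical.propDecidable

/-- There is a directed edge from `a` to `b` in the dependence graph `G(A)`:
an edge from `j` to `i` whenever `i ≠ j` and `A i j ≠ 0`. -/
def Edge {n : ℕ} (A : Matrix (Fin n) (Fin n) ℝ) (a b : Fin n) : Prop :=
  a ≠ b ∧ A b a ≠ 0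

/-- `i` reaches `j`: reflexive–transitive closure of the edge relation. -/
def Reaches {n : ℕ} (A : Matrix (Fin n) (Fin n) ℝ) : Fin n → Fin n → Prop :=
  Relation.ReflTransGen (Edge A)

/-- Mutual reachability. -/
def Mutual {n : ℕ} (A : Matrix (Fin n) (Fin n) ℝ) (i j : Fin n) : Prop :=
  Reaches A i j ∧ Reaches A j i

/-- `S` is a strongly connected component of `G(A)`:
an equivalence class of the mutual-reachability relation. -/
def IsSCC {n : ℕ} (A : Matrix (Fin n) (Fin n) ℝ) (S : Set (Fin n)) : Prop :=
  ∃ i : Fin n, S = {j | Mutual A i j}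

/-- The block `A_S`: the principal submatrix of `A` on rows and columns indexed by `S`. -/
def block {n : ℕ} (A : Matrix (Fin n) (Fin n) ℝ) (S : Set (Fin n)) : Matrix S S ℝ :=
  A.submatrix Subtype.val Subtype.val

/-- The eigenvalues of a real square matrix: complex roots of its characteristic polynomial. -/
def IsEigenvalue {m : Type*} [Fintype m] [DecidableEq m]
    (M : Matrix m m ℝ) (z : ℂ) : Prop :=
  ((M.charpoly).map (algebraMap ℝ ℂ)).IsRoot z

/-- `A` is a Metzler matrix. -/
def Metzler {n : ℕ} (A : Matrix (Fin n) (Fin n) ℝ) : Prop :=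
  ∀ i j, i ≠ j → 0 ≤ A i j

/-- `S` is sub-critical: every eigenvalue of `A_S` has negative real part. -/
def SubCritical {n : ℕ} (A : Matrix (Fin n) (Fin n) ℝ) (S : Set (Fin n)) : Prop :=
  ∀ z : ℂ, IsEigenvalue (block A S) z → z.re < 0

/-- `S` is critical: `0` is an eigenvalue of `A_S` and all eigenvalues of `A_S` have
nonpositive real part. -/
def Critical {n : ℕ} (A : Matrix (Fin n) (Fin n) ℝ) (S : Set (Fin n)) : Prop :=
  IsEigenvalue (block A S) 0 ∧ ∀ z : ℂ, IsEigenvalue (block A S) z → z.re ≤ 0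

/-- `S` is super-critical: `A_S` has an eigenvalue with positive real part. -/
def SuperCritical {n : ℕ} (A : Matrix (Fin n) (Fin n) ℝ) (S : Set (Fin n)) : Prop :=
  ∃ z : ℂ, IsEigenvalue (block A S) z ∧ 0 < z.re

/-- `m` is a nonnegative fixed point of `A`. -/
def NonnegFixedPoint {n : ℕ} (A : Matrix (Fin n) (Fin n) ℝ) (m : Fin n → ℝ) : Prop :=
  (∀ i, 0 ≤ m i) ∧ A *ᵥ m = 0

/-- `S` is trivial: every nonnegative fixed point vanishes on every vertex of `S`. -/
def TrivialSCC {n : ℕ} (A : Matrix (Fin n) (Fin n) ℝ) (S : Set (Fin n)) : Prop :=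
  ∀ m : Fin n → ℝ, NonnegFixedPoint A m → ∀ i ∈ S, m i = 0

/-- `S` is upstream of `T` (and `T` downstream of `S`). -/
def Upstream {n : ℕ} (A : Matrix (Fin n) (Fin n) ℝ) (S T : Set (Fin n)) : Prop :=
  ∃ i ∈ S, ∃ j ∈ T, Reaches A i j

/-- `S` is immediately upstream of `T`. -/
def ImmediatelyUpstream {n : ℕ} (A : Matrix (Fin n) (Fin n) ℝ) (S T : Set (Fin n)) : Prop :=
  S ≠ T ∧ ∃ i ∈ S, ∃ j ∈ T, Edge A i j

/-- The matrix exponential `exp M = ∑ M^k / k!`. -/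
noncomputable def mexp {n : ℕ} (M : Matrix (Fin n) (Fin n) ℝ) : Matrix (Fin n) (Fin n) ℝ :=
  ∑' k : ℕ, ((k.factorial : ℝ)⁻¹) • M ^ k

section Aux

variable {n : ℕ} (A : Matrix (Fin n) (Fin n) ℝ)

lemma mutual_refl (i : Fin n) : Mutual A i i :=
  ⟨Relation.ReflTransGen.refl, Relation.ReflTransGen.refl⟩

lemma mutual_symm {i j : Fin n} (h : Mutual A i j) : Mutual A j i := ⟨h.2, h.1⟩

lemma mutual_trans {i j k : Fin n} (h : Mutual A i j) (h' : Mutual A j k) :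
    Mutual A i k := ⟨h.1.trans h'.1, h'.2.trans h.2⟩

/-- ancestors of a vertex -/
noncomputable def Anc (i : Fin n) : Finset (Fin n) :=
  Finset.univ.filter (fun j => Reaches A j i)

lemma anc_mono {i j : Fin n} (h : Reaches A i j) : Anc A i ⊆ Anc A j := by
  intro k hk
  simp only [Anc, Finset.mem_filter, Finset.mem_univ, true_and] at hk ⊢
  exact hk.trans h

lemma mutual_of_anc_eq {i j : Fin n} (h : Anc A i = Anc A j) : Mutual A i j := by
  have hi : i ∈ Anc A i := by
    simp only [Anc, Finset.mem_filter, Finset.mem_univ, true_and]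
    exact Relation.ReflTransGen.refl
  have hj : j ∈ Anc A j := by
    simp only [Anc, Finset.mem_filter, Finset.mem_univ, true_and]
    exact Relation.ReflTransGen.refl
  rw [h] at hi; rw [← h] at hj
  simp only [Anc, Finset.mem_filter, Finset.mem_univ, true_and] at hi hj
  exact ⟨hi, hj⟩

lemma anc_eq_of_mutual {i j : Fin n} (h : Mutual A i j) : Anc A i = Anc A j :=
  Finset.Subset.antisymm (anc_mono A h.1) (anc_mono A h.2)

/-- If the determinant of the block of a non-supercritical SCC is zero, it is critical. -/
lemma critical_of_det_eq_zero {S : Set (Fin n)} (hS : IsSCC A S)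
    (hsup : ¬ SuperCritical A S) (hdet : (block A S).det = 0) : Critical A S := by
  have h0 : (block A S).charpoly.coeff 0 = 0 := by
    have h := Matrix.det_eq_sign_charpoly_coeff (block A S)
    rw [hdet] at h
    rcases mul_eq_zero.1 h.symm with h' | h'
    · exact absurd h' (by simp)
    · exact h'
  constructor
  · unfold IsEigenvalue
    rw [Polynomial.IsRoot, Polynomial.eval_map, Polynomial.eval₂_at_zero, h0, map_zero]
  · intro z hz
    by_contra h
    exact hsup ⟨z, hz, lt_of_not_ge h⟩

end Aux

/-- if no SCC is super-critical, a nonnegative fixed point is uniquely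
determined by its values on the vertices of the critical SCCs. -/
theorem fixedPoint_determined_on_critical (n : ℕ) (hn : 1 ≤ n)
    (A : Matrix (Fin n) (Fin n) ℝ) (hA : Metzler A)
    (hsup : ∀ S : Set (Fin n), IsSCC A S → ¬ SuperCritical A S)
    (m m' : Fin n → ℝ)
    (hm : NonnegFixedPoint A m) (hm' : NonnegFixedPoint A m')
    (hagree : ∀ i : Fin n,
      (∃ S : Set (Fin n), IsSCC A S ∧ Critical A S ∧ i ∈ S) → m i = m' i) :
    m = m' := by
  classical
  set C : Set (Fin n) := {i | ∃ S : Set (Fin n), IsSCC A S ∧ Critical A S ∧ i ∈ S} with hC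
  -- C is closed under mutual reachability
  have hCmut : ∀ i j : Fin n, Mutual A i j → j ∈ C → i ∈ C := by
    rintro i j hij ⟨S, hS, hcrit, hjS⟩
    obtain ⟨i', hi'⟩ := id hS
    have hji' : Mutual A i' j := by rw [hi'] at hjS; exact hjS
    have : Mutual A i' i := mutual_trans A hji' (mutual_symm A hij)
    exact ⟨S, hS, hcrit, by rw [hi']; exact this⟩
  set d : Fin n → ℝ := m - m' with hd
  have hdC : ∀ i ∈ C, d i = 0 := by
    intro i hi
    simp only [hd, Pi.sub_apply, sub_eq_zero]
    exact hagree i hi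
  have hAd : A *ᵥ d = 0 := by
    rw [hd, Matrix.mulVec_sub, hm.2, hm'.2, sub_zero]
  -- the subtype of non-critical vertices
  set U : Set (Fin n) := Cᶜ with hU
  set M : Matrix U U ℝ := A.submatrix Subtype.val Subtype.val with hM
  -- block triangular structure over the colex order on ancestor sets (dualized)
  set b : U → (Colex (Finset (Fin n)))ᵒᵈ :=
    fun i => OrderDual.toDual (toColex (Anc A i.1)) with hb
  have hbt : M.BlockTriangular b := by
    intro i j hlt
    by_contra hMij
    have hne : j.1 ≠ i.1 := by
      intro h
      have : b i = b j := by simp [hb, h]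
      rw [this] at hlt
      exact lt_irrefl _ hlt
    have hedge : Edge A j.1 i.1 := ⟨hne, by simpa [hM] using hMij⟩
    have hreach : Reaches A j.1 i.1 := Relation.ReflTransGen.single hedge
    have hsub : Anc A j.1 ⊆ Anc A i.1 := anc_mono A hreach
    have : b i ≤ b j := by
      simp only [hb, OrderDual.toDual_le_toDual]
      exact Finset.Colex.toColex_le_toColex_of_subset hsub
    exact absurd hlt (not_lt_of_ge this)
  -- each diagonal square block has nonzero determinant
  have hblocks : ∀ a ∈ Finset.univ.image b, (M.toSquareBlock b a).det ≠ 0 := by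
    intro a ha
    obtain ⟨i₀, -, hi₀⟩ := Finset.mem_image.1 ha
    set S : Set (Fin n) := {j | Mutual A i₀.1 j} with hS
    have hSCC : IsSCC A S := ⟨i₀.1, rfl⟩
    -- membership characterization of the square block
    have hmem : ∀ x : U, b x = a ↔ x.1 ∈ S := by
      intro x
      constructor
      · intro hx
        have : toColex (Anc A x.1) = toColex (Anc A i₀.1) := by
          have := hx.trans hi₀.symm
          simpa [hb] using this
        have hanc : Anc A x.1 = Anc A i₀.1 := toColex_inj.1 this
        exact mutual_symm A (mutual_of_anc_eq A hanc)
      · intro hx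
        have hanc : Anc A x.1 = Anc A i₀.1 := anc_eq_of_mutual A (mutual_symm A hx)
        rw [← hi₀]
        simp [hb, hanc]
    -- the equivalence between the square block's index type and S
    have hSU : ∀ j : Fin n, j ∈ S → j ∈ U := by
      intro j hj hjC
      exact i₀.2 (hCmut i₀.1 j hj hjC)
    let e : {x : U // b x = a} ≃ S :=
      { toFun := fun x => ⟨x.1.1, (hmem x.1).1 x.2⟩
        invFun := fun y => ⟨⟨y.1, hSU y.1 y.2⟩, (hmem ⟨y.1, hSU y.1 y.2⟩).2 y.2⟩
        left_inv := fun x => by ext; rfl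
        right_inv := fun y => by ext; rfl }
    have hdeteq : (M.toSquareBlock b a).det = (block A S).det := by
      have : M.toSquareBlock b a = (block A S).submatrix e e := by
        ext x y
        rfl
      rw [this, Matrix.det_submatrix_equiv_self]
    rw [hdeteq]
    intro hdet0
    have hcrit : Critical A S := critical_of_det_eq_zero A hSCC (hsup S hSCC) hdet0
    exact i₀.2 ⟨S, hSCC, hcrit, mutual_refl A i₀.1⟩
  -- M has nonzero determinant, hence is a unit
  have hdetM : M.det ≠ 0 := by
    rw [hbt.det]
    exact Finset.prod_ne_zero_iff.2 hblocks
  have hunit : IsUnit M := by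
    rw [Matrix.isUnit_iff_isUnit_det]
    exact isUnit_iff_ne_zero.2 hdetM
  -- the restriction of d to U is killed by M
  have hMd : M *ᵥ (fun i : U => d i.1) = 0 := by
    funext i
    have h0 : ∑ j : Fin n, A i.1 j * d j = 0 := by
      have := congrFun hAd i.1
      simpa [Matrix.mulVec, dotProduct] using this
    have hsplit := Finset.sum_filter_add_sum_filter_not Finset.univ
      (fun j => j ∈ C) (fun j => A i.1 j * d j)
    have h1 : ∑ j ∈ Finset.univ.filter (fun j => j ∈ C), A i.1 j * d j = 0 := by
      apply Finset.sum_eq_zero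
      intro j hj
      rw [hdC j (Finset.mem_filter.1 hj).2, mul_zero]
    rw [h1, zero_add, h0] at hsplit
    have h2 : ∑ j : U, A i.1 j.1 * d j.1 = 0 := by
      rw [← Finset.sum_subtype (Finset.univ.filter (fun j => ¬ j ∈ C))
        (fun x => by simp [hU, hC, Set.mem_compl_iff]) (fun j => A i.1 j * d j)]
      exact hsplit
    simpa [Matrix.mulVec, dotProduct, hM] using h2
  have hdU : ∀ i : U, d i.1 = 0 := by
    have hinj := Matrix.mulVec_injective_iff_isUnit.2 hunit
    have : (fun i : U => d i.1) = 0 := by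
      apply hinj
      rw [hMd, Matrix.mulVec_zero]
    intro i
    exact congrFun this i
  funext i
  by_cases hi : i ∈ C
  · exact hagree i hi
  · have := hdU ⟨i, hi⟩
    simpa [hd, sub_eq_zero] using this
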